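/- Let A, B ∈ Mₙ(ℂ). If for every C ∈ Mₙ(ℂ) there exists a unitary matrix U with ‖A - U B U*‖₂ ≤ ‖C - U B U*‖₂ (Frobenius norm), then A lies in the closure of the convex hull of the unitary orbit {U B U* : U unitary} of B. -/

import Mathlib

open Matrix

/-- The Frobenius (Hilbert–Schmidt) norm of a complex matrix. -/
noncomputable def frobNorm {n : ℕ} (M : Matrix (Fin n) (Fin n) ℂ) : ℝ :=
  Real.sqrt ((Mᴴ * M).trace.re)

/-- Realification of complex matrices as a real Euclidean space. -/
noncomputable def matEquiv (n : ℕ) :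
    Matrix (Fin n) (Fin n) ℂ ≃ₗ[ℝ] EuclideanSpace ℝ ((Fin n × Fin n) × Fin 2) where
  toFun M := WithLp.toLp 2 (fun p : (Fin n × Fin n) × Fin 2 => if p.2 = 0 then (M p.1.1 p.1.2).re else (M p.1.1 p.1.2).im)
  invFun x := fun i j => ⟨x ((i, j), 0), x ((i, j), 1)⟩
  map_add' M N := by
    ext p
    by_cases hp : p.2 = 0 <;> simp [hp]
  map_smul' r M := by
    ext p
    by_cases hp : p.2 = 0 <;>
      simp [hp, Complex.smul_re, Complex.smul_im]
  left_inv M := by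
    funext i j
    simp
  right_inv x := by
    ext p
    obtain ⟨⟨i, j⟩, k⟩ := p
    fin_cases k <;> simp

theorem matEquiv_ofLp {n : ℕ} (M : Matrix (Fin n) (Fin n) ℂ) (p : (Fin n × Fin n) × Fin 2) :
    (matEquiv n M).ofLp p = if p.2 = 0 then (M p.1.1 p.1.2).re else (M p.1.1 p.1.2).im := rfl

theorem frobNorm_eq {n : ℕ} (M : Matrix (Fin n) (Fin n) ℂ) :
    frobNorm M = ‖matEquiv n M‖ := by
  rw [frobNorm, EuclideanSpace.norm_eq]
  congr 1
  have lhs : (Mᴴ * M).trace.re = ∑ j, ∑ i, ((M i j).re ^ 2 + (M i j).im ^ 2) := by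
    simp [Matrix.trace, Matrix.diag, Matrix.mul_apply, Complex.re_sum,
      Matrix.conjTranspose_apply, Complex.mul_re, sq]
  rw [lhs, Finset.sum_comm]
  rw [Fintype.sum_prod_type, Fintype.sum_prod_type]
  simp [matEquiv_ofLp, Fin.sum_univ_two, Real.norm_eq_abs, sq_abs]

theorem stmt_10 {n : ℕ} (A B : Matrix (Fin n) (Fin n) ℂ)
    (h : ∀ C : Matrix (Fin n) (Fin n) ℂ, ∃ U ∈ Matrix.unitaryGroup (Fin n) ℂ,
      frobNorm (A - U * B * star U) ≤ frobNorm (C - U * B * star U)) :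
    A ∈ closure (convexHull ℝ
      {M | ∃ U ∈ Matrix.unitaryGroup (Fin n) ℂ, M = U * B * star U}) := by
  by_contra hA
  set s : Set (Matrix (Fin n) (Fin n) ℂ) :=
    {M | ∃ U ∈ Matrix.unitaryGroup (Fin n) ℂ, M = U * B * star U} with hs
  set φ := matEquiv n with hφ
  set K : Set (EuclideanSpace ℝ ((Fin n × Fin n) × Fin 2)) :=
    closure (convexHull ℝ (φ '' s)) with hK
  have hBs : B ∈ s := ⟨1, one_mem _, by simp⟩
  have hKim : K = φ '' closure (convexHull ℝ s) := by
    have h1 : (convexHull ℝ) (⇑φ '' s) = ⇑φ '' (convexHull ℝ) s := by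
      simpa using (φ.toLinearMap.image_convexHull s).symm
    have h2 : ⇑φ '' closure (convexHull ℝ s) = closure (⇑φ '' convexHull ℝ s) := by
      simpa using φ.toContinuousLinearEquiv.toHomeomorph.image_closure (convexHull ℝ s)
    rw [hK, h1, ← h2]
  have haK : φ A ∉ K := by
    rw [hKim]
    intro ⟨x, hx, hxA⟩
    exact hA (φ.injective hxA ▸ hx)
  have hconv : Convex ℝ K := (convex_convexHull ℝ _).closure
  have hKne : K.Nonempty := ⟨φ B, subset_closure (subset_convexHull ℝ _ ⟨B, hBs, rfl⟩)⟩
  obtain ⟨v, hvK, hv⟩ := exists_norm_eq_iInf_of_complete_convex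
    hKne isClosed_closure.isComplete hconv (φ A)
  have hproj := (norm_eq_iInf_iff_real_inner_le_zero hconv hvK).mp hv
  obtain ⟨U, hU, hle⟩ := h (φ.symm v)
  set M := U * B * star U with hM
  have hMs : M ∈ s := ⟨U, hU, rfl⟩
  have hmK : φ M ∈ K := subset_closure (subset_convexHull ℝ _ ⟨M, hMs, rfl⟩)
  have hip := hproj (φ M) hmK
  have h1 : ‖φ A - φ M‖ ≤ ‖v - φ M‖ := by
    have := hle
    rwa [frobNorm_eq, frobNorm_eq, map_sub, map_sub, φ.apply_symm_apply] at this
  have h2 : φ A ≠ v := fun hc => haK (hc ▸ hvK)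
  have h3 : (0:ℝ) < ‖φ A - v‖ := by
    rw [norm_pos_iff]
    exact sub_ne_zero.mpr h2
  have key : ‖φ A - φ M‖ ^ 2 = ‖φ A - v‖ ^ 2 - 2 * inner ℝ (φ A - v) (φ M - v) + ‖φ M - v‖ ^ 2 := by
    have := norm_sub_sq_real (φ A - v) (φ M - v)
    rw [show φ A - v - (φ M - v) = φ A - φ M by abel] at this
    linarith
  have h4 : ‖v - φ M‖ = ‖φ M - v‖ := norm_sub_rev _ _
  nlinarith [norm_nonneg (φ A - φ M), norm_nonneg (φ M - v), sq_nonneg (‖φ A - v‖)]
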